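/- Let Γ be the Cayley graph of A∗B with Γ_A the embedded Cayley graph of A and π : Γ → Γ_A the natural projection. If γ : [a,b] → Γ is a continuous (λ,ε)-quasi-geodesic with endpoints in Γ_A, then π∘γ is a continuous (λ,ε)-quasi-geodesic in Γ_A, and the Hausdorff distance between γ and π∘γ is at most λ²ε + ε. -/

import Mathlib

open Set Monoid

/-- A Morse gauge. -/
abbrev MorseGauge := ℝ → ℝ → ℝ

/-- A list of letters from `S ∪ S⁻¹`. -/
def IsWordOver {G : Type*} [Group G] (S : Set G) (l : List G) : Prop :=
  ∀ x ∈ l, x ∈ S ∨ x⁻¹ ∈ S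

/-- The word metric on `G` associated to the generating set `S`. -/
noncomputable def wordDist {G : Type*} [Group G] (S : Set G) (x y : G) : ℝ :=
  sInf {r : ℝ | ∃ l : List G, IsWordOver S l ∧ l.prod = x⁻¹ * y ∧ r = l.length}

section Discrete

variable {G : Type*}

/-- A discrete `(L,e)`-quasi-geodesic with respect to the distance function `d`,
parametrised over a set of integers. -/
def IsQGOnD (d : G → G → ℝ) (L e : ℝ) (γ : ℤ → G) (s : Set ℤ) : Prop :=
  ∀ i ∈ s, ∀ j ∈ s,
    (1 / L) * |(i : ℝ) - (j : ℝ)| - e ≤ d (γ i) (γ j) ∧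
      d (γ i) (γ j) ≤ L * |(i : ℝ) - (j : ℝ)| + e

/-- A discrete geodesic with respect to `d`. -/
def IsGeodesicOnD (d : G → G → ℝ) (γ : ℤ → G) (s : Set ℤ) : Prop :=
  ∀ i ∈ s, ∀ j ∈ s, d (γ i) (γ j) = |(i : ℝ) - (j : ℝ)|

/-- The discrete analogue of continuity: consecutive points are at distance at most `1`. -/
def IsContinuousD (d : G → G → ℝ) (γ : ℤ → G) (s : Set ℤ) : Prop :=
  ∀ i, i ∈ s → i + 1 ∈ s → d (γ i) (γ (i + 1)) ≤ 1

/-- The (discrete) path `γ` on `s` is `M`-Morse w.r.t. `d`: every discrete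
`(L,e)`-quasi-geodesic with endpoints on `γ` stays `M L e`-close to `γ`. -/
def IsMorseOnD (d : G → G → ℝ) (M : MorseGauge) (γ : ℤ → G) (s : Set ℤ) : Prop :=
  ∀ L e, 1 ≤ L → 0 ≤ e → ∀ (η : ℤ → G) (a b : ℤ), a ≤ b →
    IsQGOnD d L e η (Icc a b) → η a ∈ γ '' s → η b ∈ γ '' s →
    ∀ i ∈ Icc a b, ∃ j ∈ s, d (η i) (γ j) ≤ M L e

end Discrete

variable {A B : Type*} [Group A] [Group B]

/-- A syllable viewed inside the free product `A ∗ B`. -/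
def sylElem : A ⊕ B → Monoid.Coprod A B
  | Sum.inl a => Monoid.Coprod.inl a
  | Sum.inr b => Monoid.Coprod.inr b

/-- A list of syllables is alternating. -/
def AltList (l : List (A ⊕ B)) : Prop := l.Chain' (fun x y => x.isLeft ≠ y.isLeft)

/-- A reduced representation: alternating list of nontrivial syllables. -/
def ReducedList (l : List (A ⊕ B)) : Prop :=
  AltList l ∧ ∀ x ∈ l, x ≠ Sum.inl (1 : A) ∧ x ≠ Sum.inr (1 : B)

/-- `u ∈ A ∗ B` has a reduced representation starting with a nontrivial `B`-syllable. -/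
def startsWithB (u : Monoid.Coprod A B) : Prop :=
  ∃ (b : B) (l : List (A ⊕ B)),
    ReducedList (Sum.inr b :: l) ∧ ((Sum.inr b :: l).map sylElem).prod = u

/-- `C_a`: elements whose reduced representation properly begins with the `A`-syllable `a`. -/
def Cset (a : A) : Set (Monoid.Coprod A B) :=
  {w | ∃ u, startsWithB u ∧ w = Monoid.Coprod.inl a * u}

open Classical in
/-- The projection `π : A ∗ B → A`: the identity on `A`, and the separating element
`a` with `w ∈ C_a` otherwise. -/
noncomputable def projA (w : Monoid.Coprod A B) : A :=
  if h : ∃ a : A, Monoid.Coprod.inl a = w then h.choose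
  else if h' : ∃ a : A, w ∈ Cset a then h'.choose else 1

/-- The generating set of the free product `A ∗ B` induced by `S_A` and `S_B`. -/
def fpGens (SA : Set A) (SB : Set B) : Set (Monoid.Coprod A B) :=
  (fun a : A => (Monoid.Coprod.inl a : Monoid.Coprod A B)) '' SA ∪
    (fun b : B => (Monoid.Coprod.inr b : Monoid.Coprod A B)) '' SB


namespace Stmt7Aux

variable {G : Type*} [Group G] {S : Set G} {x y z : G}

def WS (S : Set G) (x y : G) : Set ℝ :=
  {r : ℝ | ∃ l : List G, IsWordOver S l ∧ l.prod = x⁻¹ * y ∧ r = l.length}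

lemma wordDist_def (S : Set G) (x y : G) : wordDist S x y = sInf (WS S x y) := rfl

lemma WS_bddBelow (S : Set G) (x y : G) : BddBelow (WS S x y) :=
  ⟨0, fun r ⟨l, _, _, hr⟩ => hr ▸ Nat.cast_nonneg _⟩

lemma wordDist_nonneg (S : Set G) (x y : G) : 0 ≤ wordDist S x y :=
  Real.sInf_nonneg (by rintro r ⟨l, -, -, rfl⟩; positivity)

lemma wordDist_le_length {l : List G} (hl : IsWordOver S l) {x y : G}
    (hp : l.prod = x⁻¹ * y) : wordDist S x y ≤ l.length :=
  csInf_le (WS_bddBelow S x y) ⟨l, hl, hp, rfl⟩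

lemma wordDist_self (S : Set G) (x : G) : wordDist S x x = 0 := by
  refine le_antisymm ?_ (wordDist_nonneg S x x)
  have h : IsWordOver S ([] : List G) := fun z hz => absurd hz List.not_mem_nil
  simpa using wordDist_le_length h (x := x) (y := x) (by simp)

lemma exists_min_word (h : (WS S x y).Nonempty) :
    ∃ l : List G, IsWordOver S l ∧ l.prod = x⁻¹ * y ∧ (l.length : ℝ) = wordDist S x y := by
  set T : Set ℕ := {n | ∃ l : List G, IsWordOver S l ∧ l.prod = x⁻¹ * y ∧ n = l.length} with hT
  have hTne : T.Nonempty := by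
    obtain ⟨r, l, hl, hp, hr⟩ := h
    exact ⟨l.length, l, hl, hp, rfl⟩
  obtain ⟨l, hl, hp, hn⟩ := Nat.sInf_mem hTne
  refine ⟨l, hl, hp, le_antisymm ?_ ?_⟩
  · apply le_csInf h
    rintro r ⟨l', hl', hp', rfl⟩
    have : sInf T ≤ l'.length := Nat.sInf_le ⟨l', hl', hp', rfl⟩
    rw [hn] at this
    exact_mod_cast this
  · exact csInf_le (WS_bddBelow S x y) ⟨l, hl, hp, hn ▸ rfl⟩

lemma wordDist_triangle (hxy : (WS S x y).Nonempty) (hyz : (WS S y z).Nonempty) :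
    wordDist S x z ≤ wordDist S x y + wordDist S y z := by
  obtain ⟨l1, h1, p1, e1⟩ := exists_min_word hxy
  obtain ⟨l2, h2, p2, e2⟩ := exists_min_word hyz
  have hw : IsWordOver S (l1 ++ l2) := by
    intro g hg
    rcases List.mem_append.1 hg with h | h
    exacts [h1 g h, h2 g h]
  have hp : (l1 ++ l2).prod = x⁻¹ * z := by
    rw [List.prod_append, p1, p2]; group
  calc wordDist S x z ≤ ((l1 ++ l2).length : ℝ) := wordDist_le_length hw hp
    _ = wordDist S x y + wordDist S y z := by
        rw [List.length_append]; push_cast [← e1, ← e2]; ring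

lemma wordDist_symm (S : Set G) (x y : G) : wordDist S x y = wordDist S y x := by
  have key : ∀ u v : G, WS S u v ⊆ WS S v u := by
    rintro u v r ⟨l, hl, hp, rfl⟩
    refine ⟨(l.map fun g => g⁻¹).reverse, ?_, ?_, by simp⟩
    · intro g hg
      simp only [List.mem_reverse, List.mem_map] at hg
      obtain ⟨g', hg', rfl⟩ := hg
      rcases hl g' hg' with h | h
      · exact Or.inr (by simpa using h)
      · exact Or.inl h
    · rw [← List.prod_inv_reverse, hp]; group
  rw [wordDist_def, wordDist_def, Set.Subset.antisymm (key x y) (key y x)]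

variable {A B : Type*} [Group A] [Group B]

variable {A : Type u} {B : Type v} [Group A] [Group B]

def PP (l : List (A ⊕ B)) : Monoid.Coprod A B := (l.map sylElem).prod

@[simp] lemma PP_nil : PP ([] : List (A ⊕ B)) = 1 := rfl
@[simp] lemma PP_cons (z : A ⊕ B) (l : List (A ⊕ B)) :
    PP (z :: l) = sylElem z * PP l := by simp [PP]
@[simp] lemma PP_append (l l' : List (A ⊕ B)) : PP (l ++ l') = PP l * PP l' := by simp [PP]
@[simp] lemma syl_inl_one : sylElem (Sum.inl (1 : A) : A ⊕ B) = 1 := by simp [sylElem]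
@[simp] lemma syl_inr_one : sylElem (Sum.inr (1 : B) : A ⊕ B) = 1 := by simp [sylElem]
lemma syl_inl_mul (a a' : A) :
    sylElem (Sum.inl a : A ⊕ B) * sylElem (Sum.inl a') = sylElem (Sum.inl (a * a')) := by
  simp [sylElem]
lemma syl_inr_mul (b b' : B) :
    sylElem (Sum.inr b : A ⊕ B) * sylElem (Sum.inr b') = sylElem (Sum.inr (b * b')) := by
  simp [sylElem]

lemma reduced_nil : ReducedList ([] : List (A ⊕ B)) := ⟨List.isChain_nil, by simp⟩

lemma reduced_concat_iff (r₀ : List (A ⊕ B)) (y : A ⊕ B) :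
    ReducedList (r₀ ++ [y]) ↔ ReducedList r₀ ∧ (y ≠ Sum.inl 1 ∧ y ≠ Sum.inr 1) ∧
      (∀ x ∈ r₀.getLast?, x.isLeft ≠ y.isLeft) := by
  unfold ReducedList AltList List.Chain'
  constructor
  · rintro ⟨hc, hm⟩
    rw [List.isChain_append] at hc
    refine ⟨⟨hc.1, fun x hx => hm x (by simp [hx])⟩, hm y (by simp), ?_⟩
    intro x hx
    exact hc.2.2 x hx y (by simp)
  · rintro ⟨⟨hc, hm⟩, hy, hlast⟩
    refine ⟨List.isChain_append.2 ⟨hc, List.isChain_singleton y, ?_⟩, ?_⟩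
    · intro x hx y' hy'
      simp only [List.head?_cons, Option.mem_def, Option.some.injEq] at hy'
      subst hy'; exact hlast x hx
    · intro x hx
      rcases List.mem_append.1 hx with h | h
      · exact hm x h
      · simp only [List.mem_singleton] at h; subst h; exact hy

lemma reduced_cons {x : A ⊕ B} {l : List (A ⊕ B)} (hr : ReducedList (x :: l)) : ReducedList l :=
  ⟨hr.1.tail, fun z hz => hr.2 z (List.mem_cons_of_mem x hz)⟩

/-- The master surgery lemma: multiplying a reduced word by a single letter on the right. -/
lemma surgery (r : List (A ⊕ B)) (hr : ReducedList r) (z : A ⊕ B) :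
    ∃ r' : List (A ⊕ B), ReducedList r' ∧ PP r' = PP r * sylElem z ∧
      (r' = [] ∨ r = [] ∨ r'.head?.map Sum.isLeft = r.head?.map Sum.isLeft) := by
  by_cases hz : z = Sum.inl (1 : A) ∨ z = Sum.inr (1 : B)
  · -- trivial letter
    refine ⟨r, hr, ?_, ?_⟩
    · rcases hz with rfl | rfl <;> simp
    · rcases r with _ | ⟨x, t⟩
      · exact Or.inl rfl
      · exact Or.inr (Or.inr rfl)
  push_neg at hz
  rcases List.eq_nil_or_concat r with rfl | ⟨r₀, y, rfl⟩
  · -- r = []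
    refine ⟨[z], ⟨List.isChain_singleton z, by simpa using hz⟩, by simp, Or.inr (Or.inl rfl)⟩
  rw [List.concat_eq_append] at *
  obtain ⟨hr₀, hy, hlast⟩ := (reduced_concat_iff r₀ y).1 hr
  have headlem : ∀ w : A ⊕ B, w.isLeft = y.isLeft →
      ((r₀ ++ [w]).head?.map Sum.isLeft = (r₀ ++ [y]).head?.map Sum.isLeft) := by
    intro w hw
    rcases r₀ with _ | ⟨x, t⟩ <;> simp [hw]
  have headnil : r₀ = [] ∨
      (r₀.head?.map Sum.isLeft = (r₀ ++ [y]).head?.map Sum.isLeft) := by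
    rcases r₀ with _ | ⟨x, t⟩
    · exact Or.inl rfl
    · exact Or.inr (by simp)
  rcases y with a | b <;> rcases z with s | t
  · -- y = inl a, z = inl s : merge
    by_cases hm : a * s = 1
    · refine ⟨r₀, hr₀, ?_, ?_⟩
      · rw [PP_append, PP_cons, PP_nil, mul_one, mul_assoc, syl_inl_mul, hm, syl_inl_one,
          mul_one]
      · rcases headnil with h | h
        · exact Or.inl h
        · exact Or.inr (Or.inr h)
    · refine ⟨r₀ ++ [Sum.inl (a * s)], ?_, ?_, ?_⟩
      · rw [reduced_concat_iff]
        exact ⟨hr₀, ⟨by simpa using hm, by simp⟩, fun x hx => by simpa using hlast x hx⟩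
      · rw [PP_append, PP_append, PP_cons, PP_cons, PP_nil, mul_one, mul_one, mul_assoc,
          syl_inl_mul]
      · exact Or.inr (Or.inr (headlem _ rfl))
  · -- y = inl a, z = inr t : append
    refine ⟨(r₀ ++ [Sum.inl a]) ++ [Sum.inr t], ?_, by simp [mul_assoc], ?_⟩
    · rw [reduced_concat_iff]
      refine ⟨hr, ⟨by simp, by simpa using hz.2⟩, ?_⟩
      intro x hx
      simp only [List.getLast?_concat, Option.mem_def, Option.some.injEq] at hx
      subst hx; simp
    · refine Or.inr (Or.inr ?_)
      rcases r₀ with _ | ⟨x, t'⟩ <;> simp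
  · -- y = inr b, z = inl s : append
    refine ⟨(r₀ ++ [Sum.inr b]) ++ [Sum.inl s], ?_, by simp [mul_assoc], ?_⟩
    · rw [reduced_concat_iff]
      refine ⟨hr, ⟨by simpa using hz.1, by simp⟩, ?_⟩
      intro x hx
      simp only [List.getLast?_concat, Option.mem_def, Option.some.injEq] at hx
      subst hx; simp
    · refine Or.inr (Or.inr ?_)
      rcases r₀ with _ | ⟨x, t'⟩ <;> simp
  · -- y = inr b, z = inr t : merge
    by_cases hm : b * t = 1
    · refine ⟨r₀, hr₀, ?_, ?_⟩
      · rw [PP_append, PP_cons, PP_nil, mul_one, mul_assoc, syl_inr_mul, hm, syl_inr_one,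
          mul_one]
      · rcases headnil with h | h
        · exact Or.inl h
        · exact Or.inr (Or.inr h)
    · refine ⟨r₀ ++ [Sum.inr (b * t)], ?_, ?_, ?_⟩
      · rw [reduced_concat_iff]
        exact ⟨hr₀, ⟨by simp, by simpa using hm⟩, fun x hx => by simpa using hlast x hx⟩
      · rw [PP_append, PP_append, PP_cons, PP_cons, PP_nil, mul_one, mul_one, mul_assoc,
          syl_inr_mul]
      · exact Or.inr (Or.inr (headlem _ rfl))

/-- Every element has a reduced representation. -/
lemma exists_reduced (w : Monoid.Coprod A B) : ∃ l, ReducedList l ∧ PP l = w := by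
  have hsyl : ∀ w : Monoid.Coprod A B, ∃ zs : List (A ⊕ B), PP zs = w := by
    intro w
    induction w using Monoid.Coprod.induction_on with
    | inl m => exact ⟨[Sum.inl m], by simp [sylElem]⟩
    | inr n => exact ⟨[Sum.inr n], by simp [sylElem]⟩
    | mul x y hx hy =>
      obtain ⟨zs, rfl⟩ := hx
      obtain ⟨zs', rfl⟩ := hy
      exact ⟨zs ++ zs', by simp⟩
  obtain ⟨zs, rfl⟩ := hsyl w
  induction zs using List.reverseRecOn with
  | nil => exact ⟨[], reduced_nil, rfl⟩
  | append_singleton zs z ih =>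
    obtain ⟨l, hl, hPl⟩ := ih
    obtain ⟨r', hr', hP', -⟩ := surgery l hl z
    exact ⟨r', hr', by rw [hP', hPl, PP_append, PP_cons, PP_nil, mul_one]⟩

/-! ### The bridge to `CoprodI` and uniqueness of reduced representations -/

abbrev MM (A : Type u) (B : Type v) : Bool → Type (max u v) :=
  fun i => cond i (ULift.{v} A) (ULift.{u} B)

instance : ∀ i, Group (MM A B i)
  | true => inferInstanceAs (Group (ULift A))
  | false => inferInstanceAs (Group (ULift B))

noncomputable def phi : Monoid.Coprod A B →* CoprodI (MM A B) :=
  Monoid.Coprod.lift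
    ((CoprodI.of (M := MM A B) (i := true)).comp MulEquiv.ulift.symm.toMonoidHom)
    ((CoprodI.of (M := MM A B) (i := false)).comp MulEquiv.ulift.symm.toMonoidHom)

def toSig : A ⊕ B → Σ i, MM A B i
  | Sum.inl a => ⟨true, ULift.up a⟩
  | Sum.inr b => ⟨false, ULift.up b⟩

lemma toSig_injective : Function.Injective (toSig (A := A) (B := B)) := by
  rintro (a | b) (a' | b') h <;> simp [toSig] at h <;> simp [h]

lemma toSig_fst (z : A ⊕ B) : (toSig z).fst = z.isLeft := by cases z <;> rfl

lemma phi_syl (z : A ⊕ B) : phi (sylElem z) = CoprodI.of (toSig z).snd := by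
  cases z <;> rfl

/-- A reduced list gives a `CoprodI.Word`. -/
def toWord (l : List (A ⊕ B)) (hl : ReducedList l) : CoprodI.Word (MM A B) where
  toList := l.map toSig
  ne_one := by
    intro s hs
    obtain ⟨z, hz, rfl⟩ := List.mem_map.1 hs
    rcases z with a | b
    · have := (hl.2 _ hz).1
      simp only [toSig, ne_eq]
      intro h1
      exact this (by rw [show a = 1 from congrArg ULift.down h1])
    · have := (hl.2 _ hz).2
      simp only [toSig, ne_eq]
      intro h1
      exact this (by rw [show b = 1 from congrArg ULift.down h1])
  chain_ne := by
    rw [List.isChain_map]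
    refine hl.1.imp ?_
    intro x y h
    rwa [ne_eq, toSig_fst, toSig_fst] at *

lemma prod_toWord (l : List (A ⊕ B)) (hl : ReducedList l) :
    (toWord l hl).prod = phi (PP l) := by
  unfold CoprodI.Word.prod PP
  rw [map_list_prod phi]
  show (List.map (fun s => CoprodI.of s.snd) (l.map toSig)).prod = _
  rw [List.map_map, List.map_map]
  congr 1
  refine List.map_congr_left ?_
  intro z _
  exact (phi_syl z).symm

/-- Uniqueness of reduced representations. -/
lemma reduced_unique {l l' : List (A ⊕ B)} (hl : ReducedList l) (hl' : ReducedList l')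
    (h : PP l = PP l') : l = l' := by
  classical
  have hw : toWord l hl = toWord l' hl' := by
    apply (CoprodI.Word.equiv (M := MM A B)).symm.injective
    show (toWord l hl).prod = (toWord l' hl').prod
    rw [prod_toWord, prod_toWord, h]
  have := congrArg CoprodI.Word.toList hw
  exact List.map_injective_iff.2 toSig_injective this

/-! ### Classification, `Cset` and `projA` -/

lemma mem_Cset {w : Monoid.Coprod A B} {c : A} :
    w ∈ Cset c ↔ ∃ (b : B) (l : List (A ⊕ B)), ReducedList (Sum.inr b :: l) ∧
      w = Monoid.Coprod.inl c * PP (Sum.inr b :: l) := by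
  constructor
  · rintro ⟨u, ⟨b, l, hred, hu⟩, rfl⟩
    exact ⟨b, l, hred, by rw [← hu]; rfl⟩
  · rintro ⟨b, l, hred, rfl⟩
    exact ⟨PP (Sum.inr b :: l), ⟨b, l, hred, rfl⟩, rfl⟩

open Classical in
/-- Prepend the `A`-syllable `c` if it is nontrivial. -/
noncomputable def aug (c : A) (r : List (A ⊕ B)) : List (A ⊕ B) :=
  if c = 1 then r else Sum.inl c :: r

lemma PP_aug (c : A) (r : List (A ⊕ B)) : PP (aug c r) = Monoid.Coprod.inl c * PP r := by
  unfold aug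
  classical
  split_ifs with h
  · rw [h, map_one, one_mul]
  · rw [PP_cons]; rfl

lemma reduced_aug (c : A) {b : B} {l : List (A ⊕ B)} (hr : ReducedList (Sum.inr b :: l)) :
    ReducedList (aug c (Sum.inr b :: l)) := by
  unfold aug
  classical
  split_ifs with h
  · exact hr
  · refine ⟨List.isChain_cons_cons.2 ⟨by simp, hr.1⟩, ?_⟩
    intro x hx
    rcases List.mem_cons.1 hx with rfl | hx
    · exact ⟨fun hc => h (Sum.inl.injEq _ _ ▸ (by injection hc)), by simp⟩
    · exact hr.2 x hx

lemma inl_not_mem_Cset (x c : A) : (Monoid.Coprod.inl x : Monoid.Coprod A B) ∉ Cset c := by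
  rw [mem_Cset]
  rintro ⟨b, l, hred, heq⟩
  have h1 : PP (Sum.inr b :: l) = (Monoid.Coprod.inl (c⁻¹ * x) : Monoid.Coprod A B) := by
    rw [map_mul, heq, ← mul_assoc, ← map_mul, inv_mul_cancel, map_one, one_mul]
  by_cases hx : c⁻¹ * x = 1
  · have h2 : PP (Sum.inr b :: l) = PP ([] : List (A ⊕ B)) := by
      rw [h1, hx, PP_nil, map_one]
    exact List.cons_ne_nil _ _ (reduced_unique hred reduced_nil h2)
  · have hred' : ReducedList ([Sum.inl (c⁻¹ * x)] : List (A ⊕ B)) := by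
      refine ⟨List.isChain_singleton _, ?_⟩
      intro z hz
      rcases List.mem_singleton.1 hz with rfl
      exact ⟨by simpa using hx, by simp⟩
    have h2 : PP (Sum.inr b :: l) = PP ([Sum.inl (c⁻¹ * x)] : List (A ⊕ B)) := by
      rw [h1, PP_cons, PP_nil, mul_one]; rfl
    have := reduced_unique hred hred' h2
    simp at this

lemma Cset_unique {w : Monoid.Coprod A B} {c c' : A} (h : w ∈ Cset c) (h' : w ∈ Cset c') :
    c = c' := by
  obtain ⟨b, l, hred, rfl⟩ := mem_Cset.1 h
  obtain ⟨b', l', hred', heq⟩ := mem_Cset.1 h'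
  have hP : PP (aug c (Sum.inr b :: l)) = PP (aug c' (Sum.inr b' :: l')) := by
    rw [PP_aug, PP_aug, ← heq]
  have haug := reduced_unique (reduced_aug c hred) (reduced_aug c' hred') hP
  unfold aug at haug
  classical
  split_ifs at haug with h1 h2 h2
  · rw [h1, h2]
  · simp at haug
  · simp at haug
  · have := congrArg List.head? haug
    simp only [List.head?_cons, Option.some.injEq] at this
    simpa using this

lemma classify (w : Monoid.Coprod A B) :
    (∃ x : A, w = Monoid.Coprod.inl x) ∨ ∃ c : A, w ∈ Cset c := by
  obtain ⟨l, hl, hPl⟩ := exists_reduced w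
  subst hPl
  match l, hl with
  | [], _ => exact Or.inl ⟨1, by rw [PP_nil, map_one]⟩
  | [Sum.inl x], _ => exact Or.inl ⟨x, by simp [PP, sylElem]⟩
  | (Sum.inl x :: z :: t), hl =>
    rcases z with a | b
    · exact absurd (List.isChain_cons_cons.1 hl.1).1 (by simp)
    · refine Or.inr ⟨x, mem_Cset.2 ⟨b, t, reduced_cons hl, ?_⟩⟩
      rw [PP_cons]; rfl
  | (Sum.inr b :: t), hl =>
    exact Or.inr ⟨1, mem_Cset.2 ⟨b, t, hl, by rw [map_one, one_mul]⟩⟩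

lemma projA_inl (x : A) : projA (Monoid.Coprod.inl x : Monoid.Coprod A B) = x := by
  have h : ∃ a : A, (Monoid.Coprod.inl a : Monoid.Coprod A B) = Monoid.Coprod.inl x := ⟨x, rfl⟩
  unfold projA
  rw [dif_pos h]
  exact Monoid.Coprod.inl_injective h.choose_spec

lemma projA_Cset {w : Monoid.Coprod A B} {c : A} (hw : w ∈ Cset c) : projA w = c := by
  have h1 : ¬∃ a : A, (Monoid.Coprod.inl a : Monoid.Coprod A B) = w := by
    rintro ⟨a, rfl⟩
    exact inl_not_mem_Cset a c hw
  have h2 : ∃ a : A, w ∈ Cset a := ⟨c, hw⟩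
  unfold projA
  rw [dif_neg h1, dif_pos h2]
  exact Cset_unique h2.choose_spec hw

lemma Cset_mul_syl {w : Monoid.Coprod A B} {c : A} (hw : w ∈ Cset c) (z : A ⊕ B) :
    w * sylElem z ∈ Cset c ∨ w * sylElem z = Monoid.Coprod.inl c := by
  obtain ⟨b, l, hred, rfl⟩ := mem_Cset.1 hw
  obtain ⟨r', hr', hP', hd⟩ := surgery (Sum.inr b :: l) hred z
  have hkey : Monoid.Coprod.inl c * PP (Sum.inr b :: l) * sylElem z
      = Monoid.Coprod.inl c * PP r' := by rw [hP', mul_assoc]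
  rcases hd with rfl | h | h
  · right; rw [hkey, PP_nil, mul_one]
  · exact absurd h (List.cons_ne_nil _ _)
  · left
    rcases r' with _ | ⟨z', t'⟩
    · simp at h
    · rcases z' with a' | b'
      · simp at h
      · exact mem_Cset.2 ⟨b', t', hr', hkey⟩

lemma inl_mul_syl (x : A) (z : A ⊕ B) :
    (∃ s : A, z = Sum.inl s ∧
        (Monoid.Coprod.inl x : Monoid.Coprod A B) * sylElem z = Monoid.Coprod.inl (x * s)) ∨
      (Monoid.Coprod.inl x : Monoid.Coprod A B) * sylElem z = Monoid.Coprod.inl x ∨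
      (Monoid.Coprod.inl x : Monoid.Coprod A B) * sylElem z ∈ Cset x := by
  rcases z with s | t
  · exact Or.inl ⟨s, rfl, (map_mul (Monoid.Coprod.inl : A →* Monoid.Coprod A B) x s).symm⟩
  · by_cases ht : t = 1
    · subst ht
      exact Or.inr (Or.inl (by rw [syl_inr_one, mul_one]))
    · refine Or.inr (Or.inr (mem_Cset.2 ⟨t, [], ?_, ?_⟩))
      · exact ⟨List.isChain_singleton _, fun z hz => by
          rcases List.mem_singleton.1 hz with rfl
          exact ⟨by simp, by simpa using ht⟩⟩
      · rw [PP_cons, PP_nil, mul_one]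

/-! ### Generating sets and the projection is 1-Lipschitz -/

lemma WS_SA_nonempty {SA : Set A} (hSAgen : Subgroup.closure SA = ⊤) (x y : A) :
    (WS SA x y).Nonempty := by
  have hx : x⁻¹ * y ∈ Subgroup.closure SA := hSAgen ▸ Subgroup.mem_top _
  rw [← Subgroup.mem_toSubmonoid, Subgroup.closure_toSubmonoid] at hx
  obtain ⟨l, hl, hp⟩ := Submonoid.exists_list_of_mem_closure hx
  refine ⟨l.length, l, ?_, hp, rfl⟩
  intro g hg
  rcases hl g hg with h | h
  · exact Or.inl h
  · exact Or.inr (by simpa using h)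

lemma isWordOver_map_inl {SA : Set A} (SB : Set B) {l : List A} (hl : IsWordOver SA l) :
    IsWordOver (fpGens SA SB) (l.map (Monoid.Coprod.inl : A →* Monoid.Coprod A B)) := by
  intro g hg
  obtain ⟨s, hs, rfl⟩ := List.mem_map.1 hg
  rcases hl s hs with h | h
  · exact Or.inl (Or.inl ⟨s, h, rfl⟩)
  · exact Or.inr (Or.inl ⟨s⁻¹, h, by rw [← map_inv]⟩)

lemma isWordOver_map_inr (SA : Set A) {SB : Set B} {l : List B} (hl : IsWordOver SB l) :
    IsWordOver (fpGens SA SB) (l.map (Monoid.Coprod.inr : B →* Monoid.Coprod A B)) := by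
  intro g hg
  obtain ⟨s, hs, rfl⟩ := List.mem_map.1 hg
  rcases hl s hs with h | h
  · exact Or.inl (Or.inr ⟨s, h, rfl⟩)
  · exact Or.inr (Or.inr ⟨s⁻¹, h, by rw [← map_inv]⟩)

lemma WS_fp_nonempty {SA : Set A} {SB : Set B} (hSAgen : Subgroup.closure SA = ⊤)
    (hSBgen : Subgroup.closure SB = ⊤) (x y : Monoid.Coprod A B) :
    (WS (fpGens SA SB) x y).Nonempty := by
  suffices h : ∀ w : Monoid.Coprod A B,
      ∃ l : List (Monoid.Coprod A B), IsWordOver (fpGens SA SB) l ∧ l.prod = w by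
    obtain ⟨l, hl, hp⟩ := h (x⁻¹ * y)
    exact ⟨l.length, l, hl, hp, rfl⟩
  intro w
  induction w using Monoid.Coprod.induction_on with
  | inl m =>
    obtain ⟨_, l, hl, hp, -⟩ := WS_SA_nonempty hSAgen 1 m
    refine ⟨l.map Monoid.Coprod.inl, isWordOver_map_inl SB hl, ?_⟩
    rw [← map_list_prod, hp, inv_one, one_mul]
  | inr n =>
    obtain ⟨_, l, hl, hp, -⟩ := WS_SA_nonempty hSBgen 1 n
    refine ⟨l.map Monoid.Coprod.inr, isWordOver_map_inr SA hl, ?_⟩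
    rw [← map_list_prod, hp, inv_one, one_mul]
  | mul x y hx hy =>
    obtain ⟨l1, hl1, hp1⟩ := hx
    obtain ⟨l2, hl2, hp2⟩ := hy
    refine ⟨l1 ++ l2, ?_, by rw [List.prod_append, hp1, hp2]⟩
    intro g hg
    rcases List.mem_append.1 hg with h | h
    exacts [hl1 g h, hl2 g h]

lemma letter_cases {SA : Set A} {SB : Set B} {g : Monoid.Coprod A B}
    (hg : g ∈ fpGens SA SB ∨ g⁻¹ ∈ fpGens SA SB) :
    (∃ s : A, g = Monoid.Coprod.inl s ∧ (s ∈ SA ∨ s⁻¹ ∈ SA)) ∨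
      (∃ t : B, g = Monoid.Coprod.inr t) := by
  rcases hg with (⟨s, hs, rfl⟩ | ⟨t, ht, rfl⟩) | (⟨s, hs, hinv⟩ | ⟨t, ht, hinv⟩)
  · exact Or.inl ⟨s, rfl, Or.inl hs⟩
  · exact Or.inr ⟨t, rfl⟩
  · refine Or.inl ⟨s⁻¹, ?_, Or.inr (by simpa using hs)⟩
    have hg' : g = (Monoid.Coprod.inl s : Monoid.Coprod A B)⁻¹ := by
      rw [show (Monoid.Coprod.inl s : Monoid.Coprod A B) = g⁻¹ from hinv, inv_inv]
    rw [hg', ← map_inv]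
  · refine Or.inr ⟨t⁻¹, ?_⟩
    have hg' : g = (Monoid.Coprod.inr t : Monoid.Coprod A B)⁻¹ := by
      rw [show (Monoid.Coprod.inr t : Monoid.Coprod A B) = g⁻¹ from hinv, inv_inv]
    rw [hg', ← map_inv]

lemma letter_syl {SA : Set A} {SB : Set B} {g : Monoid.Coprod A B}
    (hg : g ∈ fpGens SA SB ∨ g⁻¹ ∈ fpGens SA SB) : ∃ z : A ⊕ B, g = sylElem z := by
  rcases letter_cases hg with ⟨s, rfl, -⟩ | ⟨t, rfl⟩
  exacts [⟨Sum.inl s, rfl⟩, ⟨Sum.inr t, rfl⟩]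

lemma proj_step (SA : Set A) (SB : Set B) (w : Monoid.Coprod A B) {g : Monoid.Coprod A B}
    (hg : g ∈ fpGens SA SB ∨ g⁻¹ ∈ fpGens SA SB) :
    wordDist SA (projA w) (projA (w * g)) ≤ 1 := by
  rcases classify w with ⟨x, rfl⟩ | ⟨c, hc⟩
  · rcases letter_cases hg with ⟨s, rfl, hs⟩ | ⟨t, rfl⟩
    · rw [← map_mul, projA_inl, projA_inl]
      have h1 : IsWordOver SA [s] := by
        intro z hz
        rcases List.mem_singleton.1 hz with rfl
        exact hs
      have h2 : ([s] : List A).prod = x⁻¹ * (x * s) := by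
        rw [List.prod_singleton, ← mul_assoc, inv_mul_cancel, one_mul]
      simpa using wordDist_le_length h1 h2
    · rcases inl_mul_syl x (Sum.inr t) with ⟨s, hs, -⟩ | h | h
      · exact absurd hs (by simp)
      · rw [show (Monoid.Coprod.inr t : Monoid.Coprod A B) = sylElem (Sum.inr t) from rfl, h,
          projA_inl, wordDist_self]
        norm_num
      · rw [show (Monoid.Coprod.inr t : Monoid.Coprod A B) = sylElem (Sum.inr t) from rfl,
          projA_Cset h, projA_inl, wordDist_self]
        norm_num
  · obtain ⟨z, rfl⟩ := letter_syl hg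
    rcases Cset_mul_syl hc z with h | h
    · rw [projA_Cset hc, projA_Cset h, wordDist_self]; norm_num
    · rw [projA_Cset hc, h, projA_inl, wordDist_self]; norm_num

lemma proj_word (SA : Set A) (SB : Set B) (hSAgen : Subgroup.closure SA = ⊤)
    {l : List (Monoid.Coprod A B)} (hl : IsWordOver (fpGens SA SB) l) :
    ∀ w : Monoid.Coprod A B, wordDist SA (projA w) (projA (w * l.prod)) ≤ l.length := by
  induction l with
  | nil =>
    intro w
    rw [List.prod_nil, mul_one, wordDist_self]
    simp
  | cons g l ih =>
    intro w
    have h1 := proj_step SA SB w (hl g (List.mem_cons_self))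
    have h2 := ih (fun x hx => hl x (List.mem_cons_of_mem g hx)) (w * g)
    have h3 : w * (g :: l).prod = w * g * l.prod := by rw [List.prod_cons, mul_assoc]
    calc wordDist SA (projA w) (projA (w * (g :: l).prod))
        ≤ wordDist SA (projA w) (projA (w * g)) +
          wordDist SA (projA (w * g)) (projA (w * (g :: l).prod)) :=
          wordDist_triangle (WS_SA_nonempty hSAgen _ _) (WS_SA_nonempty hSAgen _ _)
      _ ≤ 1 + l.length := by rw [h3]; exact add_le_add h1 h2
      _ = ((g :: l).length : ℝ) := by simp [add_comm]

lemma proj_lipschitz (SA : Set A) (SB : Set B) (hSAgen : Subgroup.closure SA = ⊤)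
    (hSBgen : Subgroup.closure SB = ⊤) (x y : Monoid.Coprod A B) :
    wordDist SA (projA x) (projA y) ≤ wordDist (fpGens SA SB) x y := by
  obtain ⟨l, hl, hp, hlen⟩ := exists_min_word (WS_fp_nonempty hSAgen hSBgen x y)
  have := proj_word SA SB hSAgen hl x
  rw [hp, mul_inv_cancel_left, hlen] at this
  exact this

lemma dist_inl_eq (SA : Set A) (SB : Set B) (hSAgen : Subgroup.closure SA = ⊤)
    (hSBgen : Subgroup.closure SB = ⊤) (x y : A) :
    wordDist (fpGens SA SB) (Monoid.Coprod.inl x) (Monoid.Coprod.inl y) = wordDist SA x y := by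
  refine le_antisymm ?_ ?_
  · obtain ⟨l, hl, hp, hlen⟩ := exists_min_word (WS_SA_nonempty hSAgen x y)
    have hp' : (l.map (Monoid.Coprod.inl : A →* Monoid.Coprod A B)).prod
        = (Monoid.Coprod.inl x)⁻¹ * Monoid.Coprod.inl y := by
      rw [← map_list_prod, hp, map_mul, map_inv]
    have := wordDist_le_length (isWordOver_map_inl SB hl) hp'
    rwa [List.length_map, hlen] at this
  · have := proj_lipschitz SA SB hSAgen hSBgen (Monoid.Coprod.inl x) (Monoid.Coprod.inl y)
    rwa [projA_inl, projA_inl] at this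

end Stmt7Aux

/-- if `γ : [a,b] → Γ` is a continuous `(L,e)`-quasi-geodesic in the Cayley
graph of `A ∗ B` with endpoints in `Γ_A`, then `π ∘ γ` is a continuous `(L,e)`-quasi-geodesic
in `Γ_A` and the Hausdorff distance between `γ` and `π ∘ γ` is at most `L²e + e`. -/
theorem stmt7 (A B : Type*) [Group A] [Group B] (SA : Set A) (SB : Set B)
    (hSAfin : SA.Finite) (hSBfin : SB.Finite)
    (hSAgen : Subgroup.closure SA = ⊤) (hSBgen : Subgroup.closure SB = ⊤)
    (L e : ℝ) (hL : 1 ≤ L) (he : 0 ≤ e)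
    (a b : ℤ) (hab : a ≤ b) (γ : ℤ → Monoid.Coprod A B)
    (hqg : IsQGOnD (wordDist (fpGens SA SB)) L e γ (Set.Icc a b))
    (hcont : IsContinuousD (wordDist (fpGens SA SB)) γ (Set.Icc a b))
    (hendA : (∃ x : A, γ a = Monoid.Coprod.inl x) ∧ ∃ y : A, γ b = Monoid.Coprod.inl y) :
    IsQGOnD (wordDist SA) L e (fun i => projA (γ i)) (Set.Icc a b) ∧
    IsContinuousD (wordDist SA) (fun i => projA (γ i)) (Set.Icc a b) ∧
    (∀ i ∈ Set.Icc a b,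
      wordDist (fpGens SA SB) (γ i) (Monoid.Coprod.inl (projA (γ i))) ≤ L ^ 2 * e + e) := by
  classical
  obtain ⟨⟨xa, hxa⟩, ⟨yb, hyb⟩⟩ := hendA
  have hL0 : (0:ℝ) < L := lt_of_lt_of_le one_pos hL
  have hlip : ∀ x y : Monoid.Coprod A B,
      wordDist SA (projA x) (projA y) ≤ wordDist (fpGens SA SB) x y :=
    Stmt7Aux.proj_lipschitz SA SB hSAgen hSBgen
  -- step decomposition of the path
  have hstep : ∀ i : ℤ, i ∈ Set.Icc a b → i + 1 ∈ Set.Icc a b →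
      γ (i+1) = γ i ∨ ∃ g, (g ∈ fpGens SA SB ∨ g⁻¹ ∈ fpGens SA SB) ∧ γ (i+1) = γ i * g := by
    intro i h1 h2
    have hd := hcont i h1 h2
    obtain ⟨l, hl, hp, hlen⟩ := Stmt7Aux.exists_min_word
      (Stmt7Aux.WS_fp_nonempty hSAgen hSBgen (γ i) (γ (i+1)))
    have hlen1 : l.length ≤ 1 := by
      rw [hlen.symm] at hd
      exact_mod_cast hd
    rcases l with _ | ⟨g, _ | ⟨g', t⟩⟩
    · left
      rw [List.prod_nil] at hp
      exact ((inv_mul_eq_one).1 hp.symm).symm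
    · right
      refine ⟨g, hl g (List.mem_cons_self), ?_⟩
      rw [List.prod_singleton] at hp
      rw [hp, mul_inv_cancel_left]
    · simp at hlen1
  have hnotinA : ∀ c : A, γ a ∉ Cset c := fun c => by
    rw [hxa]; exact Stmt7Aux.inl_not_mem_Cset _ _
  have hnotinB : ∀ c : A, γ b ∉ Cset c := fun c => by
    rw [hyb]; exact Stmt7Aux.inl_not_mem_Cset _ _
  -- hitting times on the left
  have hhitL : ∀ i ∈ Set.Icc a b, ∃ k, a ≤ k ∧ k ≤ i ∧
      γ k = Monoid.Coprod.inl (projA (γ i)) := by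
    intro i hi
    obtain ⟨hia, hib⟩ := Set.mem_Icc.1 hi
    rcases Stmt7Aux.classify (γ i) with ⟨x, hx⟩ | ⟨c, hc⟩
    · exact ⟨i, hia, le_refl i, by rw [hx, Stmt7Aux.projA_inl]⟩
    · rw [Stmt7Aux.projA_Cset hc]
      obtain ⟨k0, ⟨hk0a, hk0i, hk0n⟩, hk0max⟩ :=
        Int.exists_greatest_of_bdd (P := fun k => a ≤ k ∧ k ≤ i ∧ γ k ∉ Cset c)
          ⟨i, fun z hz => hz.2.1⟩ ⟨a, le_refl a, hia, hnotinA c⟩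
      have hk0lt : k0 < i := by
        rcases lt_or_eq_of_le hk0i with h | h
        · exact h
        · exact absurd (by rwa [h]) hk0n
      have hsucc : γ (k0+1) ∈ Cset c := by
        by_contra hcon
        have := hk0max (k0+1) ⟨by omega, by omega, hcon⟩
        omega
      rcases hstep k0 (Set.mem_Icc.2 ⟨hk0a, by omega⟩) (Set.mem_Icc.2 ⟨by omega, by omega⟩)
        with heq | ⟨g, hg, heq⟩
      · rw [heq] at hsucc
        exact absurd hsucc hk0n
      · have hg' : g⁻¹ ∈ fpGens SA SB ∨ (g⁻¹)⁻¹ ∈ fpGens SA SB := by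
          rcases hg with h | h
          · exact Or.inr (by rwa [inv_inv])
          · exact Or.inl h
        obtain ⟨z, hz⟩ := Stmt7Aux.letter_syl hg'
        have hk0eq : γ (k0+1) * sylElem z = γ k0 := by
          rw [← hz, heq, mul_inv_cancel_right]
        rcases Stmt7Aux.Cset_mul_syl hsucc z with h | h
        · rw [hk0eq] at h
          exact absurd h hk0n
        · rw [hk0eq] at h
          exact ⟨k0, hk0a, by omega, h⟩
  -- hitting times on the right
  have hhitR : ∀ i ∈ Set.Icc a b, ∃ k, i ≤ k ∧ k ≤ b ∧
      γ k = Monoid.Coprod.inl (projA (γ i)) := by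
    intro i hi
    obtain ⟨hia, hib⟩ := Set.mem_Icc.1 hi
    rcases Stmt7Aux.classify (γ i) with ⟨x, hx⟩ | ⟨c, hc⟩
    · exact ⟨i, le_refl i, hib, by rw [hx, Stmt7Aux.projA_inl]⟩
    · rw [Stmt7Aux.projA_Cset hc]
      obtain ⟨k0, ⟨hk0i, hk0b, hk0n⟩, hk0min⟩ :=
        Int.exists_least_of_bdd (P := fun k => i ≤ k ∧ k ≤ b ∧ γ k ∉ Cset c)
          ⟨i, fun z hz => hz.1⟩ ⟨b, hib, le_refl b, hnotinB c⟩
      have hk0gt : i < k0 := by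
        rcases lt_or_eq_of_le hk0i with h | h
        · exact h
        · exact absurd (by rwa [← h]) hk0n
      have hpred : γ (k0-1) ∈ Cset c := by
        by_contra hcon
        have := hk0min (k0-1) ⟨by omega, by omega, hcon⟩
        omega
      rcases hstep (k0-1) (Set.mem_Icc.2 ⟨by omega, by omega⟩)
          (Set.mem_Icc.2 ⟨by omega, by omega⟩) with heq | ⟨g, hg, heq⟩
      · rw [show k0 - 1 + 1 = k0 by omega] at heq
        rw [heq] at hk0n
        exact absurd hpred hk0n
      · rw [show k0 - 1 + 1 = k0 by omega] at heq
        obtain ⟨z, hz⟩ := Stmt7Aux.letter_syl hg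
        rw [hz] at heq
        rcases Stmt7Aux.Cset_mul_syl hpred z with h | h
        · rw [← heq] at h
          exact absurd h hk0n
        · rw [← heq] at h
          exact ⟨k0, by omega, hk0b, h⟩
  -- closeness (conclusion 3)
  have hclose : ∀ i ∈ Set.Icc a b,
      wordDist (fpGens SA SB) (γ i) (Monoid.Coprod.inl (projA (γ i))) ≤ L ^ 2 * e + e := by
    intro i hi
    obtain ⟨hia, hib⟩ := Set.mem_Icc.1 hi
    obtain ⟨k1, hk1a, hk1i, he1⟩ := hhitL i hi
    obtain ⟨k2, hk2i, hk2b, he2⟩ := hhitR i hi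
    have hk1m : k1 ∈ Set.Icc a b := Set.mem_Icc.2 ⟨hk1a, le_trans hk1i hib⟩
    have hk2m : k2 ∈ Set.Icc a b := Set.mem_Icc.2 ⟨le_trans hia hk2i, hk2b⟩
    have h0 : wordDist (fpGens SA SB) (γ k1) (γ k2) = 0 := by
      rw [he1, he2, Stmt7Aux.wordDist_self]
    have hlow := (hqg k1 hk1m k2 hk2m).1
    rw [h0] at hlow
    have hX : 1/L * |(k1:ℝ) - (k2:ℝ)| ≤ e := by linarith
    have habs : |(k1:ℝ) - (k2:ℝ)| ≤ L * e := by
      have h2 := mul_le_mul_of_nonneg_left hX (le_of_lt hL0)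
      rwa [← mul_assoc, mul_one_div_cancel (ne_of_gt hL0), one_mul] at h2
    have hc1 : (k1:ℝ) ≤ (i:ℝ) := by exact_mod_cast hk1i
    have hc2 : (i:ℝ) ≤ (k2:ℝ) := by exact_mod_cast hk2i
    have habs2 : |(i:ℝ) - (k1:ℝ)| ≤ |(k1:ℝ) - (k2:ℝ)| := by
      rw [abs_of_nonneg (by linarith), abs_sub_comm, abs_of_nonneg (by linarith)]
      linarith
    have hup := (hqg i hi k1 hk1m).2
    calc wordDist (fpGens SA SB) (γ i) (Monoid.Coprod.inl (projA (γ i)))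
        = wordDist (fpGens SA SB) (γ i) (γ k1) := by rw [he1]
      _ ≤ L * |(i:ℝ) - (k1:ℝ)| + e := hup
      _ ≤ L * (L * e) + e := by nlinarith [habs.trans_eq (rfl), habs2]
      _ = L ^ 2 * e + e := by ring
  refine ⟨?_, ?_, hclose⟩
  · -- quasi-geodesic
    intro i hi j hj
    dsimp only
    constructor
    · rcases le_total i j with hij | hij
      · obtain ⟨k1, hk1a, hk1i, he1⟩ := hhitL i hi
        obtain ⟨k2, hk2j, hk2b, he2⟩ := hhitR j hj
        have hk1m : k1 ∈ Set.Icc a b :=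
          Set.mem_Icc.2 ⟨hk1a, le_trans hk1i (Set.mem_Icc.1 hi).2⟩
        have hk2m : k2 ∈ Set.Icc a b :=
          Set.mem_Icc.2 ⟨le_trans (Set.mem_Icc.1 hj).1 hk2j, hk2b⟩
        have hq := (hqg k1 hk1m k2 hk2m).1
        rw [he1, he2, Stmt7Aux.dist_inl_eq SA SB hSAgen hSBgen] at hq
        refine le_trans ?_ hq
        have hc1 : (k1:ℝ) ≤ (i:ℝ) := by exact_mod_cast hk1i
        have hc2 : (j:ℝ) ≤ (k2:ℝ) := by exact_mod_cast hk2j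
        have hcij : (i:ℝ) ≤ (j:ℝ) := by exact_mod_cast hij
        have habs : |(i:ℝ) - (j:ℝ)| ≤ |(k1:ℝ) - (k2:ℝ)| := by
          rw [abs_sub_comm, abs_of_nonneg (by linarith), abs_sub_comm,
            abs_of_nonneg (by linarith)]
          linarith
        have h1L : (0:ℝ) ≤ 1/L := by positivity
        nlinarith [mul_le_mul_of_nonneg_left habs h1L]
      · obtain ⟨k1, hk1a, hk1j, he1⟩ := hhitL j hj
        obtain ⟨k2, hk2i, hk2b, he2⟩ := hhitR i hi
        have hk1m : k1 ∈ Set.Icc a b :=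
          Set.mem_Icc.2 ⟨hk1a, le_trans hk1j (Set.mem_Icc.1 hj).2⟩
        have hk2m : k2 ∈ Set.Icc a b :=
          Set.mem_Icc.2 ⟨le_trans (Set.mem_Icc.1 hi).1 hk2i, hk2b⟩
        have hq := (hqg k2 hk2m k1 hk1m).1
        rw [he1, he2, Stmt7Aux.dist_inl_eq SA SB hSAgen hSBgen] at hq
        refine le_trans ?_ hq
        have hc1 : (k1:ℝ) ≤ (j:ℝ) := by exact_mod_cast hk1j
        have hc2 : (i:ℝ) ≤ (k2:ℝ) := by exact_mod_cast hk2i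
        have hcij : (j:ℝ) ≤ (i:ℝ) := by exact_mod_cast hij
        have habs : |(i:ℝ) - (j:ℝ)| ≤ |(k2:ℝ) - (k1:ℝ)| := by
          rw [abs_of_nonneg (by linarith), abs_of_nonneg (by linarith)]
          linarith
        have h1L : (0:ℝ) ≤ 1/L := by positivity
        nlinarith [mul_le_mul_of_nonneg_left habs h1L]
    · exact le_trans (hlip _ _) (hqg i hi j hj).2
  · -- continuity
    intro i h1 h2
    dsimp only
    exact le_trans (hlip _ _) (hcont i h1 h2)
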